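/- Under assumptions (iv), (v), (vi) on the first space and (ix), (x) linking it to the second space, if 𝐏({𝐗' ∈ B'} ∩ 𝐂) > 0, then for every B ∈ ℬ, 𝐏(𝐗 ∈ B | {𝐗' ∈ B'} ∩ 𝐂) = π(B). (Corollary 6.5 of the paper.) -/

import Mathlib

open MeasureTheory ProbabilityTheory

/-- Corollary 6.5 of Fill–Machida–Murdoch–Rosenthal:
under assumptions (iv), (v), (vi) on the first space and (ix), (x) linking it to
the second space, if `𝐏({𝐗' ∈ B'} ∩ 𝐂) > 0` then the conditional law of `𝐗`
given `{𝐗' ∈ B'} ∩ 𝐂` is `π`.  The trace σ-field `ℬ''` on `B'` is realized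
as the subtype σ-field on `↥B'`, whose measurable sets are exactly the sets
`Subtype.val ⁻¹' F` with `F ∈ ℬ'`, corresponding to `B' ∩ F`. -/
theorem stmt4
    {Ω bΩ 𝓧 𝓧' : Type*} [MeasurableSpace Ω] [MeasurableSpace bΩ]
    [MeasurableSpace 𝓧] [MeasurableSpace 𝓧']
    (P : Measure Ω) [IsProbabilityMeasure P]
    (bP : Measure bΩ) [IsProbabilityMeasure bP]
    (π : Measure 𝓧) [IsProbabilityMeasure π]
    (B' : Set 𝓧')
    (X : Ω → 𝓧) (X' : Ω → 𝓧') (Y : Ω → 𝓧') (C : Set Ω)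
    (bX : bΩ → 𝓧) (bX' : bΩ → 𝓧') (bC : Set bΩ)
    -- (iv): X is measurable with law π
    (hXmeas : Measurable X) (hXlaw : P.map X = π)
    -- (v)
    (hv : ∀ F : Set 𝓧', MeasurableSet F →
      MeasurableSet (X' ⁻¹' (B' ∩ F) ∩ C) ∧ MeasurableSet (Y ⁻¹' (B' ∩ F) ∩ C))
    -- (vi)
    (hvi : ∀ F : Set 𝓧', MeasurableSet F → ∀ B : Set 𝓧, MeasurableSet B → 0 < π B →
      P[X' ⁻¹' (B' ∩ F) ∩ C | X ⁻¹' B] = P (Y ⁻¹' (B' ∩ F) ∩ C))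
    -- (viii): 𝐗 is measurable
    (hbXmeas : Measurable bX)
    -- (ix)
    (hix : ∀ F : Set 𝓧', MeasurableSet F → MeasurableSet (bX' ⁻¹' (B' ∩ F) ∩ bC))
    -- the measures ν_B on (B', ℬ''), ν_B(B'') = P({X' ∈ B''} ∩ C ∩ {X ∈ B})
    (ν : Set 𝓧 → Measure ↥B')
    (hν : ∀ B : Set 𝓧, MeasurableSet B → ∀ F : Set 𝓧', MeasurableSet F →
      ν B ((Subtype.val : ↥B' → 𝓧') ⁻¹' F) = P (X' ⁻¹' (B' ∩ F) ∩ C ∩ X ⁻¹' B))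
    -- (x): a density D on B', not depending on B
    (D : ↥B' → NNReal) (hDmeas : Measurable D)
    (hx : ∀ B : Set 𝓧, MeasurableSet B → ∀ F : Set 𝓧', MeasurableSet F →
      bP (bX' ⁻¹' (B' ∩ F) ∩ bC ∩ bX ⁻¹' B)
        = ∫⁻ u in (Subtype.val : ↥B' → 𝓧') ⁻¹' F, (D u : ENNReal) ∂(ν B)) 
    -- positivity of the acceptance probability
    (hpos : 0 < bP (bX' ⁻¹' B' ∩ bC)) :
    ∀ B : Set 𝓧, MeasurableSet B → bP[bX ⁻¹' B | bX' ⁻¹' B' ∩ bC] = π B := by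
  have hPX : ∀ B : Set 𝓧, MeasurableSet B → P (X ⁻¹' B) = π B := by
    intro B hB
    rw [← hXlaw, Measure.map_apply hXmeas hB]
  -- key identity on the first space
  have key0 : ∀ F : Set 𝓧', MeasurableSet F → ∀ B : Set 𝓧, MeasurableSet B →
      P (X' ⁻¹' (B' ∩ F) ∩ C ∩ X ⁻¹' B) = π B * P (Y ⁻¹' (B' ∩ F) ∩ C) := by
    intro F hF B hB
    rcases eq_or_lt_of_le (zero_le : 0 ≤ π B) with h0 | hpos'
    · have h1 : P (X ⁻¹' B) = 0 := by rw [hPX B hB, ← h0]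
      have h2 : P (X' ⁻¹' (B' ∩ F) ∩ C ∩ X ⁻¹' B) = 0 :=
        le_antisymm (le_trans (measure_mono Set.inter_subset_right) h1.le) zero_le
      rw [h2, ← h0, zero_mul]
    · have hc := hvi F hF B hB hpos'
      rw [cond_apply (hXmeas hB)] at hc
      have hne : P (X ⁻¹' B) ≠ 0 := by rw [hPX B hB]; exact hpos'.ne'
      have hfin : P (X ⁻¹' B) ≠ ⊤ := measure_ne_top P _
      calc P (X' ⁻¹' (B' ∩ F) ∩ C ∩ X ⁻¹' B)
          = P (X ⁻¹' B ∩ (X' ⁻¹' (B' ∩ F) ∩ C)) := by rw [Set.inter_comm]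
        _ = P (X ⁻¹' B) * ((P (X ⁻¹' B))⁻¹ * P (X ⁻¹' B ∩ (X' ⁻¹' (B' ∩ F) ∩ C))) := by
            rw [← mul_assoc, ENNReal.mul_inv_cancel hne hfin, one_mul]
        _ = π B * P (Y ⁻¹' (B' ∩ F) ∩ C) := by rw [hc, hPX B hB]
  -- ν B = π B • ν univ
  have hνsmul : ∀ B : Set 𝓧, MeasurableSet B → ν B = (π B) • ν Set.univ := by
    intro B hB
    ext s hs
    obtain ⟨F, hF, rfl⟩ := hs
    rw [Measure.smul_apply, smul_eq_mul, hν B hB F hF, hν Set.univ MeasurableSet.univ F hF,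
      key0 F hF B hB, key0 F hF Set.univ MeasurableSet.univ]
    simp [measure_univ]
  -- key identity on the second space
  have key : ∀ B : Set 𝓧, MeasurableSet B →
      bP (bX' ⁻¹' B' ∩ bC ∩ bX ⁻¹' B) = π B * bP (bX' ⁻¹' B' ∩ bC) := by
    intro B hB
    have h1 := hx B hB Set.univ MeasurableSet.univ
    have h2 := hx Set.univ MeasurableSet.univ Set.univ MeasurableSet.univ
    simp only [Set.inter_univ, Set.preimage_univ] at h1 h2
    rw [setLIntegral_univ] at h1 h2
    rw [h1, h2, hνsmul B hB, lintegral_smul_measure, smul_eq_mul]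
  intro B hB
  have hS : MeasurableSet (bX' ⁻¹' B' ∩ bC) := by
    have := hix Set.univ MeasurableSet.univ
    simpa using this
  rw [cond_apply hS, key B hB, mul_comm (π B), ← mul_assoc, ENNReal.inv_mul_cancel hpos.ne' (measure_ne_top bP _),
    one_mul]
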